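/- Let a, b ∈ ℝ with b > 0, and let ρ₁(a,b) be the 6×6 matrix (1/(2(a²+b²))) · [[a²,0,0,0,ab,0],[0,b²,0,0,0,ab],[0,0,0,0,0,0],[0,0,0,0,0,0],[ab,0,0,0,b²,0],[0,ab,0,0,0,a²]], regarded as a 2⊗3 state. Then the geometric discord of ρ₁(a,b) equals 2a²b²/(a²+b²)² when a² ≥ 2b², and equals (a⁴ + 2a²b²)/(2(a²+b²)²) when a² ≤ 2b². -/

import Mathlib

open Matrix BigOperators Polynomial
open scoped Kronecker ComplexOrder

noncomputable section

/-- Squared Hilbert–Schmidt norm `‖C‖² = Tr(CᴴC)`. -/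
def hsNormSq {d : Type*} [Fintype d] (C : Matrix d d ℂ) : ℝ :=
  (Matrix.trace (Cᴴ * C)).re

/-- Trace norm `‖X‖₁ = Tr √(XᴴX)`. -/
def traceNorm {d : Type*} [Fintype d] [DecidableEq d] (X : Matrix d d ℂ) : ℝ :=
  (((Matrix.isHermitian_conjTranspose_mul_self X).eigenvectorUnitary.1 *
      diagonal (fun i => ((Real.sqrt ((Matrix.isHermitian_conjTranspose_mul_self X).eigenvalues i) : ℝ) : ℂ)) *
      (star (Matrix.isHermitian_conjTranspose_mul_self X).eigenvectorUnitary :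
        Matrix d d ℂ)).trace).re

/-- Partial transpose on the first factor: `ρ^Γ((i,k),(j,l)) = ρ((j,k),(i,l))`. -/
def ptranspose {m n : ℕ} (ρ : Matrix (Fin m × Fin n) (Fin m × Fin n) ℂ) :
    Matrix (Fin m × Fin n) (Fin m × Fin n) ℂ :=
  Matrix.of fun p q => ρ (q.1, p.2) (p.1, q.2)

/-- Negativity `N(ρ) = (‖ρ^Γ‖₁ - 1)/(m-1)`. -/
def negativity {m n : ℕ} (ρ : Matrix (Fin m × Fin n) (Fin m × Fin n) ℂ) : ℝ :=
  (traceNorm (ptranspose ρ) - 1) / ((m : ℝ) - 1)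

/-- `ψ` is an orthonormal basis of `ℂ^m` (an orthonormal family of `m` vectors). -/
def IsONB {m : ℕ} (ψ : Fin m → (Fin m → ℂ)) : Prop :=
  ∀ k l, (∑ i, star (ψ k i) * ψ l i) = if k = l then 1 else 0

/-- The rank-one projector `|v⟩⟨v|`. -/
def proj {m : ℕ} (v : Fin m → ℂ) : Matrix (Fin m) (Fin m) ℂ :=
  Matrix.vecMulVec v (fun j => star (v j))

/-- The von Neumann measurement map
`Π^A(ρ) = ∑ k, (|ψ_k⟩⟨ψ_k| ⊗ I_n) ρ (|ψ_k⟩⟨ψ_k| ⊗ I_n)`. -/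
def piA {m n : ℕ} (ψ : Fin m → (Fin m → ℂ))
    (ρ : Matrix (Fin m × Fin n) (Fin m × Fin n) ℂ) :
    Matrix (Fin m × Fin n) (Fin m × Fin n) ℂ :=
  ∑ k, (proj (ψ k) ⊗ₖ (1 : Matrix (Fin n) (Fin n) ℂ)) * ρ *
       (proj (ψ k) ⊗ₖ (1 : Matrix (Fin n) (Fin n) ℂ))

/-- Geometric discord
`D(ρ) = (m/(m-1)) · inf over von Neumann measurements of ‖ρ - Π^A(ρ)‖²`. -/
def gd {m n : ℕ} (ρ : Matrix (Fin m × Fin n) (Fin m × Fin n) ℂ) : ℝ :=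
  ((m : ℝ) / ((m : ℝ) - 1)) *
    ⨅ ψ : {ψ : Fin m → (Fin m → ℂ) // IsONB ψ}, hsNormSq (ρ - piA ψ.1 ρ)

/-- An `m ⊗ n` state: positive semidefinite with trace one. -/
def IsState {m n : ℕ} (ρ : Matrix (Fin m × Fin n) (Fin m × Fin n) ℂ) : Prop :=
  ρ.PosSemidef ∧ ρ.trace = 1

/-- Reindex a `6 × 6` matrix by `Fin 2 × Fin 3` with the ordering
`(1,1),(1,2),(1,3),(2,1),(2,2),(2,3)`. -/
def ofM6 (M : Matrix (Fin 6) (Fin 6) ℂ) :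
    Matrix (Fin 2 × Fin 3) (Fin 2 × Fin 3) ℂ :=
  Matrix.of fun p q =>
    M ⟨p.1.val * 3 + p.2.val, by have := p.1.isLt; have := p.2.isLt; omega⟩
      ⟨q.1.val * 3 + q.2.val, by have := q.1.isLt; have := q.2.isLt; omega⟩

/-- The family of states `ρ₁(a,b)`. -/
def rho1 (a b : ℝ) : Matrix (Fin 2 × Fin 3) (Fin 2 × Fin 3) ℂ :=
  ofM6 ((1 / (2 * ((a : ℂ)^2 + (b : ℂ)^2))) •
    !![(a:ℂ)^2, 0, 0, 0, (a:ℂ)*(b:ℂ), 0;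
       0, (b:ℂ)^2, 0, 0, 0, (a:ℂ)*(b:ℂ);
       0, 0, 0, 0, 0, 0;
       0, 0, 0, 0, 0, 0;
       (a:ℂ)*(b:ℂ), 0, 0, 0, (b:ℂ)^2, 0;
       0, (a:ℂ)*(b:ℂ), 0, 0, 0, (a:ℂ)^2])

-- auxiliary
set_option maxHeartbeats 4000000
set_option maxRecDepth 8000
open ComplexConjugate

def R0 (a b : ℝ) : Matrix (Fin 2 × Fin 3) (Fin 2 × Fin 3) ℂ :=
  ofM6 !![(a:ℂ)^2, 0, 0, 0, (a:ℂ)*(b:ℂ), 0;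
       0, (b:ℂ)^2, 0, 0, 0, (a:ℂ)*(b:ℂ);
       0, 0, 0, 0, 0, 0;
       0, 0, 0, 0, 0, 0;
       (a:ℂ)*(b:ℂ), 0, 0, 0, (b:ℂ)^2, 0;
       0, (a:ℂ)*(b:ℂ), 0, 0, 0, (a:ℂ)^2]

lemma proj_apply {m : ℕ} (v : Fin m → ℂ) (i j : Fin m) :
    proj v i j = v i * star (v j) := rfl

lemma onb_flip {m : ℕ} {ψ : Fin m → Fin m → ℂ} (h : IsONB ψ) (i j : Fin m) :
    (∑ k, ψ k i * star (ψ k j)) = if i = j then 1 else 0 := by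
  have hU : (Matrix.of ψ) * (Matrix.of ψ)ᴴ = 1 := by
    ext k l
    simp only [Matrix.mul_apply, Matrix.conjTranspose_apply, Matrix.of_apply, Matrix.one_apply]
    calc ∑ x, ψ k x * star (ψ l x) = star (∑ x, star (ψ k x) * ψ l x) := by
          rw [star_sum]; exact Finset.sum_congr rfl fun x _ => by simp [mul_comm]
      _ = if k = l then 1 else 0 := by rw [h k l]; split <;> simp
  have hU2 : (Matrix.of ψ)ᴴ * (Matrix.of ψ) = 1 := mul_eq_one_comm.mp hU
  have h2 := congrFun (congrFun hU2 j) i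
  simp only [Matrix.mul_apply, Matrix.conjTranspose_apply, Matrix.of_apply,
    Matrix.one_apply] at h2
  calc (∑ k, ψ k i * star (ψ k j)) = ∑ k, star (ψ k j) * ψ k i :=
        Finset.sum_congr rfl fun x _ => mul_comm _ _
    _ = if i = j then 1 else 0 := by rw [h2]; by_cases hij : i = j <;> simp [hij, eq_comm]

lemma proj_one_sub {ψ : Fin 2 → Fin 2 → ℂ} (h : IsONB ψ) :
    proj (ψ 1) = 1 - proj (ψ 0) := by
  ext i j
  have := onb_flip h i j
  rw [Fin.sum_univ_two] at this
  simp only [proj, Matrix.vecMulVec_apply, Matrix.sub_apply, Matrix.one_apply]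
  linear_combination this

lemma sandwich_apply' {m n : ℕ} (P : Matrix (Fin m) (Fin m) ℂ)
    (ρ : Matrix (Fin m × Fin n) (Fin m × Fin n) ℂ) (i j : Fin m) (k l : Fin n) :
    ((P ⊗ₖ (1 : Matrix (Fin n) (Fin n) ℂ)) * ρ * (P ⊗ₖ (1 : Matrix (Fin n) (Fin n) ℂ))) (i,k) (j,l)
      = ∑ r, ∑ s, P i r * ρ (r, k) (s, l) * P s j := by
  simp only [Matrix.mul_apply, Fintype.sum_prod_type, Matrix.kroneckerMap_apply, Matrix.one_apply,
    mul_ite, ite_mul, mul_one, mul_zero, one_mul, zero_mul, Finset.sum_ite_eq, Finset.sum_ite_eq',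
    Finset.mem_univ, if_true, Finset.mul_sum, Finset.sum_mul]
  exact Finset.sum_comm

lemma trace_conjTranspose_mul {n' : Type*} [Fintype n'] (M : Matrix n' n' ℂ) :
    Matrix.trace (Mᴴ * M) = ∑ p, ∑ q, star (M q p) * M q p := by
  simp [Matrix.trace, Matrix.diag, Matrix.mul_apply, Matrix.conjTranspose_apply]

lemma key_trace (a b : ℝ) (ψ : Fin 2 → Fin 2 → ℂ) (h : IsONB ψ) :
    Matrix.trace ((R0 a b - piA ψ (R0 a b))ᴴ * (R0 a b - piA ψ (R0 a b))) =
      4*((a:ℂ)^2*(b:ℂ)^2 +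
        (ψ 0 0 * star (ψ 0 0) * ψ 0 1 * star (ψ 0 1)) * (a:ℂ)^2*((a:ℂ)^2 - 2*(b:ℂ)^2)) := by
  have hxy : star (ψ 0 0) * ψ 0 0 + star (ψ 0 1) * ψ 0 1 = 1 := by
    have := h 0 0; rwa [Fin.sum_univ_two, if_pos rfl] at this
  rw [piA, Fin.sum_univ_two, proj_one_sub h, trace_conjTranspose_mul]
  simp only [Fintype.sum_prod_type, Fin.sum_univ_two, Fin.sum_univ_three,
    Matrix.sub_apply, Matrix.add_apply, sandwich_apply', proj_apply,
    Matrix.one_apply, R0, ofM6, Matrix.of_apply]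
  norm_num
  simp (config := { maxSteps := 10000000 }) only [Complex.star_def, map_add, map_sub,
    _root_.map_mul, map_pow, _root_.map_one, _root_.map_zero, map_neg,
    Complex.conj_conj, Complex.conj_ofReal] at hxy ⊢
  linear_combination (4*(ψ 0 0)^3*(conj (ψ 0 0))^3*(a:ℂ)^4 + 4*(ψ 0 0)^3*(conj (ψ 0 0))^3*(b:ℂ)^4 + 4*(ψ 0 0)^2*(conj (ψ 0 0))^2*(ψ 0 1)*(conj (ψ 0 1))*(a:ℂ)^4 + 16*(ψ 0 0)^2*(conj (ψ 0 0))^2*(ψ 0 1)*(conj (ψ 0 1))*(a:ℂ)^2*(b:ℂ)^2 + 12*(ψ 0 0)^2*(conj (ψ 0 0))^2*(ψ 0 1)*(conj (ψ 0 1))*(b:ℂ)^4 - 4*(ψ 0 0)^2*(conj (ψ 0 0))^2*(a:ℂ)^4 - 4*(ψ 0 0)^2*(conj (ψ 0 0))^2*(b:ℂ)^4 + 4*(ψ 0 0)*(conj (ψ 0 0))*(ψ 0 1)^2*(conj (ψ 0 1))^2*(a:ℂ)^4 + 16*(ψ 0 0)*(conj (ψ 0 0))*(ψ 0 1)^2*(conj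 (ψ 0 1))^2*(a:ℂ)^2*(b:ℂ)^2 + 12*(ψ 0 0)*(conj (ψ 0 0))*(ψ 0 1)^2*(conj (ψ 0 1))^2*(b:ℂ)^4 - 16*(ψ 0 0)*(conj (ψ 0 0))*(ψ 0 1)*(conj (ψ 0 1))*(a:ℂ)^2*(b:ℂ)^2 - 8*(ψ 0 0)*(conj (ψ 0 0))*(ψ 0 1)*(conj (ψ 0 1))*(b:ℂ)^4 + 4*(ψ 0 0)*(conj (ψ 0 0))*(a:ℂ)^2*(b:ℂ)^2 + 4*(ψ 0 1)^3*(conj (ψ 0 1))^3*(a:ℂ)^4 + 4*(ψ 0 1)^3*(conj (ψ 0 1))^3*(b:ℂ)^4 - 4*(ψ 0 1)^2*(conj (ψ 0 1))^2*(a:ℂ)^4 - 4*(ψ 0 1)^2*(conj (ψ 0 1))^2*(b:ℂ)^4 + 4*(ψ 0 1)*(conj (ψ 0 1))*(a:ℂ)^2*(b:ℂ)^2 + 4*(a:ℂ)^2*(b:ℂ)^2) * hxy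

lemma rho1_smul (a b : ℝ) :
    rho1 a b = ((((2*(a^2+b^2))⁻¹ : ℝ) : ℂ)) • R0 a b := by
  have hz : (1 / (2 * ((a : ℂ)^2 + (b : ℂ)^2))) = (((2*(a^2+b^2))⁻¹ : ℝ) : ℂ) := by
    push_cast; ring
  rw [← hz]; rfl

lemma piA_smul {m n : ℕ} (ψ : Fin m → (Fin m → ℂ)) (z : ℂ)
    (ρ : Matrix (Fin m × Fin n) (Fin m × Fin n) ℂ) :
    piA ψ (z • ρ) = z • piA ψ ρ := by
  simp [piA, Matrix.smul_mul, Matrix.mul_smul, Finset.smul_sum]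

lemma key (a b : ℝ) (hb : 0 < b) (ψ : Fin 2 → Fin 2 → ℂ) (h : IsONB ψ) :
    hsNormSq (rho1 a b - piA ψ (rho1 a b)) =
      (a^2*b^2 + (Complex.normSq (ψ 0 0) * Complex.normSq (ψ 0 1)) * (a^2*(a^2-2*b^2)))
        / (a^2+b^2)^2 := by
  have hD : (0:ℝ) < a^2 + b^2 := by positivity
  set r : ℝ := (2*(a^2+b^2))⁻¹ with hr
  have hΔ : rho1 a b - piA ψ (rho1 a b) = ((r:ℂ)) • (R0 a b - piA ψ (R0 a b)) := by
    rw [rho1_smul, piA_smul, smul_sub]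
  rw [hsNormSq, hΔ]
  rw [Matrix.conjTranspose_smul, Matrix.smul_mul, Matrix.mul_smul, Matrix.trace_smul,
    Matrix.trace_smul, key_trace a b ψ h]
  have hsx : ψ 0 0 * star (ψ 0 0) = (Complex.normSq (ψ 0 0) : ℂ) := by
    rw [Complex.star_def, Complex.mul_conj]
  have hsy : ψ 0 1 * star (ψ 0 1) = (Complex.normSq (ψ 0 1) : ℂ) := by
    rw [Complex.star_def, Complex.mul_conj]
  have hstar : star ((r:ℝ):ℂ) = ((r:ℝ):ℂ) := by
    rw [Complex.star_def, Complex.conj_ofReal]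
  rw [smul_smul, hstar]
  have : ((r:ℝ):ℂ) * ((r:ℝ):ℂ) *
      (4*((a:ℂ)^2*(b:ℂ)^2 +
        (ψ 0 0 * star (ψ 0 0) * ψ 0 1 * star (ψ 0 1)) * (a:ℂ)^2*((a:ℂ)^2 - 2*(b:ℂ)^2)))
      = (((r * r * (4*(a^2*b^2 + (Complex.normSq (ψ 0 0) * Complex.normSq (ψ 0 1)) * (a^2*(a^2-2*b^2)))) : ℝ)) : ℂ) := by
    push_cast
    linear_combination (((r:ℝ):ℂ)*((r:ℝ):ℂ)*4*(a:ℂ)^2*((a:ℂ)^2-2*(b:ℂ)^2) * (ψ 0 1 * star (ψ 0 1))) * hsx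
      + (((r:ℝ):ℂ)*((r:ℝ):ℂ)*4*(a:ℂ)^2*((a:ℂ)^2-2*(b:ℂ)^2) * ((Complex.normSq (ψ 0 0) : ℂ))) * hsy
  rw [smul_eq_mul, this, Complex.ofReal_re]
  rw [hr]
  field_simp
  ring

lemma u_bounds {ψ : Fin 2 → Fin 2 → ℂ} (h : IsONB ψ) :
    0 ≤ Complex.normSq (ψ 0 0) * Complex.normSq (ψ 0 1) ∧
      Complex.normSq (ψ 0 0) * Complex.normSq (ψ 0 1) ≤ 1/4 := by
  have hxy : star (ψ 0 0) * ψ 0 0 + star (ψ 0 1) * ψ 0 1 = 1 := by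
    have := h 0 0; rwa [Fin.sum_univ_two, if_pos rfl] at this
  have hc : ((Complex.normSq (ψ 0 0) + Complex.normSq (ψ 0 1) : ℝ) : ℂ) = 1 := by
    push_cast
    rw [← Complex.mul_conj, ← Complex.mul_conj]
    simp only [Complex.star_def] at hxy
    linear_combination hxy
  have hsum : Complex.normSq (ψ 0 0) + Complex.normSq (ψ 0 1) = 1 := by
    exact_mod_cast hc
  have h1 := Complex.normSq_nonneg (ψ 0 0)
  have h2 := Complex.normSq_nonneg (ψ 0 1)
  constructor
  · positivity
  · nlinarith [sq_nonneg (Complex.normSq (ψ 0 0) - Complex.normSq (ψ 0 1))]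

def psiId : Fin 2 → Fin 2 → ℂ := ![![1,0],![0,1]]

lemma psiId_onb : IsONB psiId := by
  intro k l
  fin_cases k <;> fin_cases l <;> simp [psiId, Fin.sum_univ_two]

def psiH : Fin 2 → Fin 2 → ℂ :=
  ![![(((Real.sqrt 2)⁻¹ : ℝ) : ℂ), (((Real.sqrt 2)⁻¹ : ℝ) : ℂ)],
    ![(((Real.sqrt 2)⁻¹ : ℝ) : ℂ), -(((Real.sqrt 2)⁻¹ : ℝ) : ℂ)]]

lemma hs2 : ((Real.sqrt 2)⁻¹ : ℝ) * ((Real.sqrt 2)⁻¹ : ℝ) = 1/2 := by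
  rw [← mul_inv, Real.mul_self_sqrt (by norm_num : (0:ℝ) ≤ 2)]
  norm_num

lemma psiH_onb : IsONB psiH := by
  have hc : (((Real.sqrt 2) : ℝ) : ℂ)⁻¹ * (((Real.sqrt 2) : ℝ) : ℂ)⁻¹ = 1/2 := by
    have : (((Real.sqrt 2)⁻¹ : ℝ) : ℂ) * (((Real.sqrt 2)⁻¹ : ℝ) : ℂ) = 1/2 := by
      rw [← Complex.ofReal_mul, hs2]; norm_num
    push_cast at this; exact this
  intro k l
  fin_cases k <;> fin_cases l <;>
    simp [psiH, Fin.sum_univ_two, Complex.star_def, Complex.conj_ofReal] <;>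
    push_cast <;>
    linear_combination 2 * hc

lemma psiH_u : Complex.normSq (psiH 0 0) * Complex.normSq (psiH 0 1) = 1/4 := by
  simp [psiH, Complex.normSq_ofReal]
  nlinarith [hs2]


theorem stmt11 (a b : ℝ) (hb : 0 < b) :
    (2 * b ^ 2 ≤ a ^ 2 →
      gd (rho1 a b) = 2 * a ^ 2 * b ^ 2 / (a ^ 2 + b ^ 2) ^ 2) ∧
    (a ^ 2 ≤ 2 * b ^ 2 →
      gd (rho1 a b) = (a ^ 4 + 2 * a ^ 2 * b ^ 2) / (2 * (a ^ 2 + b ^ 2) ^ 2)) := by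
  have hD : (0:ℝ) < a^2 + b^2 := by positivity
  haveI : Nonempty {ψ : Fin 2 → (Fin 2 → ℂ) // IsONB ψ} := ⟨⟨psiId, psiId_onb⟩⟩
  have hD2 : (0:ℝ) < (a^2+b^2)^2 := by positivity
  constructor
  · intro hcase
    set v : ℝ := a^2*b^2/(a^2+b^2)^2 with hv
    have hlb : ∀ s : {ψ : Fin 2 → (Fin 2 → ℂ) // IsONB ψ},
        v ≤ hsNormSq (rho1 a b - piA s.1 (rho1 a b)) := by
      rintro ⟨ψ, h⟩
      rw [key a b hb ψ h, hv]
      rw [div_le_div_iff_of_pos_right hD2]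
      obtain ⟨hu0, hu4⟩ := u_bounds h
      nlinarith [mul_nonneg (mul_nonneg hu0 (sq_nonneg a)) (by linarith : (0:ℝ) ≤ a^2 - 2*b^2)]
    have hwit : hsNormSq (rho1 a b - piA psiId (rho1 a b)) = v := by
      rw [key a b hb _ psiId_onb, hv]
      simp [psiId]
    have hinf : (⨅ s : {ψ : Fin 2 → (Fin 2 → ℂ) // IsONB ψ},
        hsNormSq (rho1 a b - piA s.1 (rho1 a b))) = v := by
      have hbdd : BddBelow (Set.range fun s : {ψ : Fin 2 → (Fin 2 → ℂ) // IsONB ψ} =>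
          hsNormSq (rho1 a b - piA s.1 (rho1 a b))) := by
        refine ⟨v, ?_⟩
        rintro t ⟨s, rfl⟩; exact hlb s
      have h1 := ciInf_le hbdd (⟨psiId, psiId_onb⟩ : {ψ : Fin 2 → (Fin 2 → ℂ) // IsONB ψ})
      simp only at h1
      exact le_antisymm (h1.trans hwit.le) (le_ciInf hlb)
    rw [gd, hinf, hv]
    norm_num
    ring
  · intro hcase
    set v : ℝ := (a^2*b^2 + (1/4) * (a^2*(a^2-2*b^2)))/(a^2+b^2)^2 with hv
    have hlb : ∀ s : {ψ : Fin 2 → (Fin 2 → ℂ) // IsONB ψ},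
        v ≤ hsNormSq (rho1 a b - piA s.1 (rho1 a b)) := by
      rintro ⟨ψ, h⟩
      rw [key a b hb ψ h, hv]
      rw [div_le_div_iff_of_pos_right hD2]
      obtain ⟨hu0, hu4⟩ := u_bounds h
      nlinarith [mul_nonneg (mul_nonneg (by linarith : (0:ℝ) ≤ 1/4 -
        Complex.normSq (ψ 0 0) * Complex.normSq (ψ 0 1)) (sq_nonneg a))
        (by linarith : (0:ℝ) ≤ 2*b^2 - a^2)]
    have hwit : hsNormSq (rho1 a b - piA psiH (rho1 a b)) = v := by
      rw [key a b hb _ psiH_onb, hv, psiH_u]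
    have hinf : (⨅ s : {ψ : Fin 2 → (Fin 2 → ℂ) // IsONB ψ},
        hsNormSq (rho1 a b - piA s.1 (rho1 a b))) = v := by
      have hbdd : BddBelow (Set.range fun s : {ψ : Fin 2 → (Fin 2 → ℂ) // IsONB ψ} =>
          hsNormSq (rho1 a b - piA s.1 (rho1 a b))) := by
        refine ⟨v, ?_⟩
        rintro t ⟨s, rfl⟩; exact hlb s
      have h1 := ciInf_le hbdd (⟨psiH, psiH_onb⟩ : {ψ : Fin 2 → (Fin 2 → ℂ) // IsONB ψ})
      simp only at h1
      exact le_antisymm (h1.trans hwit.le) (le_ciInf hlb)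
    rw [gd, hinf, hv]
    norm_num
    field_simp
    ring

end
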